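/- Let F(x,t) = Σ_{n≥0} Σ_{μ ∈ M_n} t^{plt(μ)} x^n be the generating function for Motzkin paths by length and total number of plateaus. Then (x² − x³)·F(x,t)² − (1 − 2x − x²(t−2))·F(x,t) + (1 − x) = 0 as formal power series. -/

import Mathlib

inductive Step : Type
  | U | F | D
  deriving DecidableEq

instance : Fintype Step := ⟨{Step.U, Step.F, Step.D}, fun x => by cases x <;> simp⟩

def stepVal : Step → ℤ
  | .U => 1
  | .F => 0
  | .D => -1

/-- Height of the path after the first `i` steps. -/
def ht (p : List Step) (i : ℕ) : ℤ := ((p.take i).map stepVal).sum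

/-- A Motzkin path: starts and ends at height 0 and stays nonnegative. -/
def IsMotzkin (p : List Step) : Prop :=
  ht p p.length = 0 ∧ ∀ i ≤ p.length, 0 ≤ ht p i

instance : DecidablePred IsMotzkin := fun p => by
  unfold IsMotzkin; infer_instance

/-- Number of ascents: maximal runs of up steps (counted at their last up step). -/
def asc (p : List Step) : ℕ :=
  ((List.range p.length).filter
    (fun i => p[i]? == some Step.U && p[i+1]? != some Step.U)).length

/-- Number of occurrences of `w` as a consecutive subword of `p`. -/
def countSubword (w p : List Step) : ℕ :=
  ((List.range p.length).filter (fun i => w.isPrefixOf (p.drop i))).length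

/-- Number of plateaus: occurrences of a subword U F^k D for some k ≥ 0. -/
def plt (p : List Step) : ℕ :=
  ((List.range p.length).filter (fun i =>
    (List.range p.length).any (fun k =>
      (Step.U :: (List.replicate k Step.F ++ [Step.D])).isPrefixOf (p.drop i)))).length

/-- first non-F symbol is D -/
def fire : List Step → Bool
  | [] => false
  | Step.F :: rest => fire rest
  | Step.D :: _ => true
  | Step.U :: _ => false

def plt2 : List Step → ℕ
  | [] => 0
  | Step.U :: rest => (if fire rest then 1 else 0) + plt2 rest
  | _ :: rest => plt2 rest

def g : List Step → Bool
  | Step.U :: rest => fire rest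
  | _ => false

lemma fire_iff (q : List Step) :
    fire q = true ↔ ∃ k, (List.replicate k Step.F ++ [Step.D]).isPrefixOf q := by
  induction q with
  | nil => simp [fire, List.isPrefixOf]
  | cons a rest ih =>
    cases a with
    | U =>
      simp only [fire]
      constructor
      · intro h; exact absurd h (by simp)
      · rintro ⟨k, hk⟩
        rcases k with _|k <;> simp_all [List.isPrefixOf, List.replicate_succ]
    | F =>
      simp only [fire, ih]
      constructor
      · rintro ⟨k, hk⟩
        exact ⟨k+1, by simpa [List.replicate_succ, List.isPrefixOf] using hk⟩
      · rintro ⟨k, hk⟩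
        rcases k with _|k
        · simp [List.isPrefixOf] at hk
        · exact ⟨k, by simpa [List.replicate_succ, List.isPrefixOf] using hk⟩
    | D =>
      simp only [fire, true_iff]
      exact ⟨0, by simp [List.isPrefixOf]⟩

lemma g_iff (q : List Step) :
    g q = true ↔ ∃ k, (Step.U :: (List.replicate k Step.F ++ [Step.D])).isPrefixOf q := by
  cases q with
  | nil => simp [g, List.isPrefixOf]
  | cons a rest =>
    cases a with
    | U => simp [g, fire_iff, List.isPrefixOf]
    | F => simp [g, List.isPrefixOf]
    | D => simp [g, List.isPrefixOf]

lemma prefix_len_le {k : ℕ} {q : List Step}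
    (h : (Step.U :: (List.replicate k Step.F ++ [Step.D])).isPrefixOf q) :
    k + 2 ≤ q.length := by
  have := List.IsPrefix.length_le (List.isPrefixOf_iff_prefix.mp h)
  simp at this; omega

lemma plt_pred_eq (p : List Step) (i : ℕ) (hi : i < p.length) :
    ((List.range p.length).any (fun k =>
      (Step.U :: (List.replicate k Step.F ++ [Step.D])).isPrefixOf (p.drop i)))
    = g (p.drop i) := by
  rcases h : g (p.drop i) with _ | _
  · simp only [List.any_eq_false]
    intro k _
    intro hk
    rw [← Bool.not_eq_true] at h
    exact h ((g_iff _).mpr ⟨k, hk⟩)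
  · rw [List.any_eq_true]
    obtain ⟨k, hk⟩ := (g_iff _).mp h
    refine ⟨k, List.mem_range.mpr ?_, hk⟩
    have := prefix_len_le hk
    have h2 : (p.drop i).length ≤ p.length := by simp
    omega

lemma plt_eq_plt2 (p : List Step) : plt p = plt2 p := by
  suffices h : ∀ p : List Step,
      ((List.range p.length).filter (fun i => g (p.drop i))).length = plt2 p by
    rw [plt, ← h]
    congr 1
    apply List.filter_congr
    intro i hi
    exact plt_pred_eq p i (List.mem_range.mp hi)
  intro p
  induction p with
  | nil => simp [plt2]
  | cons a rest ih =>
    have hrange : List.range (rest.length + 1) = 0 :: (List.range rest.length).map (· + 1) :=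
      List.range_succ_eq_map
    have hfilt : ((List.range rest.length).map (· + 1)).filter
          (fun i => g ((a :: rest).drop i))
        = ((List.range rest.length).filter (fun i => g (rest.drop i))).map (· + 1) := by
      rw [List.filter_map]
      rfl
    have key : ((List.range (rest.length + 1)).filter (fun i => g ((a :: rest).drop i))).length
        = (if g (a :: rest) then 1 else 0) + plt2 rest := by
      rw [hrange]
      rw [List.filter_cons]
      by_cases hg : g (a :: rest)
      · simp only [List.drop_zero, hg, if_true]
        simp only [List.length_cons, hfilt, List.length_map, ih]
        omega
      · simp only [List.drop_zero, hg, if_false]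
        simp [hfilt, ih]
    simp only [List.length_cons, key]
    cases a with
    | U => simp [plt2, g]; congr
    | F => simp [plt2, g]
    | D => simp [plt2, g]

def wsum (l : List Step) : ℤ := (l.map stepVal).sum

@[simp] lemma wsum_nil : wsum [] = 0 := rfl
@[simp] lemma wsum_cons (a l) : wsum (a :: l) = stepVal a + wsum l := by simp [wsum]
@[simp] lemma wsum_append (l q) : wsum (l ++ q) = wsum l + wsum q := by simp [wsum]

lemma isMotzkin_iff (p : List Step) :
    IsMotzkin p ↔ wsum p = 0 ∧ ∀ i, 0 ≤ wsum (p.take i) := by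
  constructor
  · rintro ⟨h0, h⟩
    have hp : wsum p = 0 := by simpa [ht, wsum, List.take_of_length_le (le_refl p.length)] using h0
    refine ⟨hp, fun i => ?_⟩
    by_cases hi : i ≤ p.length
    · simpa [ht, wsum] using h i hi
    · rw [List.take_of_length_le (by omega)]
      simp [hp]
  · rintro ⟨h0, h⟩
    exact ⟨by simpa [ht, wsum, List.take_of_length_le (le_refl p.length)] using h0,
      fun i _ => by simpa [ht, wsum] using h i⟩

def tailU : List Step → ℕ
  | [] => 0
  | Step.U :: rest => (if rest.all (· == Step.F) then 1 else 0) + tailU rest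
  | _ :: rest => tailU rest

lemma allF_fire {l : List Step} (h : l.all (· == Step.F) = true) : fire l = false := by
  induction l with
  | nil => rfl
  | cons a rest ih =>
    simp only [List.all_cons, Bool.and_eq_true, beq_iff_eq] at h
    obtain ⟨rfl, h2⟩ := h
    simpa [fire] using ih h2

lemma fire_append (l q : List Step) :
    fire (l ++ q) = if l.all (· == Step.F) then fire q else fire l := by
  induction l with
  | nil => simp
  | cons a rest ih =>
    cases a <;> simp [fire, ih, List.all_cons] <;> split <;> simp_all [fire]

lemma plt2_append (l q : List Step) :
    plt2 (l ++ q) = plt2 l + plt2 q + (if fire q then tailU l else 0) := by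
  induction l with
  | nil => simp [plt2, tailU]
  | cons a rest ih =>
    cases a with
    | U =>
      have hfa := fire_append rest q
      have e1 : plt2 ((Step.U :: rest) ++ q)
          = (if fire (rest ++ q) then 1 else 0) + plt2 (rest ++ q) := rfl
      have e2 : plt2 (Step.U :: rest) = (if fire rest then 1 else 0) + plt2 rest := rfl
      have e3 : tailU (Step.U :: rest)
          = (if rest.all (· == Step.F) then 1 else 0) + tailU rest := rfl
      rw [e1, e2, e3, ih, hfa]
      rcases h1 : rest.all (· == Step.F) with _ | _
      · rcases h2 : fire q with _ | _ <;>
          rcases h3 : fire rest with _ | _ <;> simp [h2, h3] <;> omega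
      · have h3 := allF_fire h1
        rcases h2 : fire q with _ | _ <;> simp [h2, h3] <;> omega
    | F => simpa [plt2, tailU] using ih
    | D => simpa [plt2, tailU] using ih

lemma allF_wsum {l : List Step} (h : l.all (· == Step.F) = true) : wsum l = 0 := by
  induction l with
  | nil => rfl
  | cons a rest ih =>
    simp only [List.all_cons, Bool.and_eq_true, beq_iff_eq] at h
    obtain ⟨rfl, h2⟩ := h
    simp [stepVal, ih h2]

lemma tailU_decomp {l : List Step} (h : tailU l ≠ 0) :
    ∃ a b, l = a ++ Step.U :: b ∧ b.all (· == Step.F) = true := by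
  induction l with
  | nil => simp [tailU] at h
  | cons x rest ih =>
    cases x with
    | U =>
      by_cases hall : rest.all (· == Step.F)
      · exact ⟨[], rest, rfl, hall⟩
      · rw [tailU, if_neg hall] at h
        rw [Nat.zero_add] at h
        obtain ⟨a, b, rfl, hb⟩ := ih h
        exact ⟨Step.U :: a, b, rfl, hb⟩
    | F =>
      obtain ⟨a, b, rfl, hb⟩ := ih (by simpa [tailU] using h)
      exact ⟨Step.F :: a, b, rfl, hb⟩
    | D =>
      obtain ⟨a, b, rfl, hb⟩ := ih (by simpa [tailU] using h)
      exact ⟨Step.D :: a, b, rfl, hb⟩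

/-- A Motzkin path has no U followed only by F's. -/
lemma motzkin_tailU {l : List Step} (h : IsMotzkin l) : tailU l = 0 := by
  rw [isMotzkin_iff] at h
  by_contra hne
  obtain ⟨a, b, rfl, hb⟩ := tailU_decomp hne
  have h1 : 0 ≤ wsum ((a ++ Step.U :: b).take a.length) := h.2 a.length
  rw [List.take_append, List.take_length, Nat.sub_self, List.take_zero,
    List.append_nil] at h1
  have h2 : wsum (a ++ Step.U :: b) = 0 := h.1
  rw [wsum_append, wsum_cons, allF_wsum hb] at h2
  simp [stepVal] at h2
  omega

/-- A Motzkin path's first non-F step, if any, is not D. -/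
lemma motzkin_fire {l : List Step} (h : IsMotzkin l) : fire l = false := by
  rw [isMotzkin_iff] at h
  by_contra hne
  rw [Bool.not_eq_false, fire_iff] at hne
  obtain ⟨k, hk⟩ := hne
  obtain ⟨t, rfl⟩ := List.isPrefixOf_iff_prefix.mp hk
  have h1 : 0 ≤ wsum (((List.replicate k Step.F ++ [Step.D]) ++ t).take (k + 1)) := h.2 (k + 1)
  rw [List.take_append] at h1
  have hlen : (List.replicate k Step.F ++ [Step.D]).length = k + 1 := by simp
  rw [List.take_of_length_le (le_of_eq hlen), hlen, Nat.sub_self, List.take_zero,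
    List.append_nil] at h1
  have : wsum (List.replicate k Step.F ++ [Step.D]) = -1 := by
    simp [wsum, stepVal, List.map_replicate]
  omega

lemma plt2_comp {ν μ : List Step} (hν : IsMotzkin ν) :
    plt2 (Step.U :: (ν ++ Step.D :: μ)) =
      (if ν.all (· == Step.F) then 1 else 0) + plt2 ν + plt2 μ := by
  have h1 : plt2 (Step.U :: (ν ++ Step.D :: μ)) =
      (if fire (ν ++ Step.D :: μ) then 1 else 0) + plt2 (ν ++ Step.D :: μ) := rfl
  rw [h1, plt2_append, fire_append, motzkin_tailU hν]
  have : plt2 (Step.D :: μ) = plt2 μ := rfl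
  rw [this]
  by_cases hall : ν.all (· == Step.F)
  · simp only [hall, if_true, fire]
    simp
    omega
  · simp [hall, fire, motzkin_fire hν]

/-- Composition of Motzkin paths. -/
lemma motzkin_comp {ν μ : List Step} (hν : IsMotzkin ν) (hμ : IsMotzkin μ) :
    IsMotzkin (Step.U :: (ν ++ Step.D :: μ)) := by
  rw [isMotzkin_iff] at *
  constructor
  · simp [stepVal, hν.1, hμ.1]
  · intro i
    rcases i with _ | j
    · simp
    rw [List.take_succ_cons, wsum_cons]
    rw [List.take_append, wsum_append]
    have hν2 : 0 ≤ wsum (ν.take j) := hν.2 j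
    have hD : -1 ≤ wsum ((Step.D :: μ).take (j - ν.length)) := by
      rcases hm : j - ν.length with _ | m
      · simp
      · rw [List.take_succ_cons, wsum_cons]
        have := hμ.2 m
        simp only [stepVal]
        omega
    simp only [stepVal]
    omega

/-- First-return decomposition. -/
lemma motzkin_decomp {rest : List Step} (h : IsMotzkin (Step.U :: rest)) :
    ∃ ν μ, rest = ν ++ Step.D :: μ ∧ IsMotzkin ν ∧ IsMotzkin μ := by
  rw [isMotzkin_iff] at h
  obtain ⟨h0, hpre⟩ := h
  have hrest : wsum rest = -1 := by
    have := h0; simp only [wsum_cons, stepVal] at this; omega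
  have hpre' : ∀ i, -1 ≤ wsum (rest.take i) := by
    intro i
    have := hpre (i + 1)
    rw [List.take_succ_cons, wsum_cons] at this
    simp only [stepVal] at this; omega
  -- find the first index where the prefix sum is -1
  have hex : ∃ j, j ≤ rest.length ∧ wsum (rest.take j) = -1 :=
    ⟨rest.length, le_refl _, by rwa [List.take_of_length_le (le_refl _)]⟩
  classical
  obtain ⟨j, ⟨hjle, hjsum⟩, hmin'⟩ :
      ∃ j, (j ≤ rest.length ∧ wsum (rest.take j) = -1) ∧
        ∀ i < j, ¬(i ≤ rest.length ∧ wsum (rest.take i) = -1) :=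
    ⟨Nat.find hex, Nat.find_spec hex, fun i hi => Nat.find_min hex hi⟩
  have hmin : ∀ i < j, wsum (rest.take i) ≠ -1 := by
    intro i hi hcon
    exact hmin' i hi ⟨by omega, hcon⟩
  have hnonneg : ∀ i < j, 0 ≤ wsum (rest.take i) := by
    intro i hi
    have := hpre' i
    have := hmin i hi
    omega
  have hj1 : j ≠ 0 := by
    intro hcon
    rw [hcon] at hjsum
    simp at hjsum
  obtain ⟨m, rfl⟩ : ∃ m, j = m + 1 := ⟨j - 1, by omega⟩
  have hmlt : m < rest.length := by omega
  have hdrop : rest.drop m = rest[m] :: rest.drop (m + 1) := List.drop_eq_getElem_cons hmlt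
  have htake : rest.take (m + 1) = rest.take m ++ [rest[m]] := by
    rw [List.take_succ, List.getElem?_eq_getElem hmlt]
    rfl
  have hsum_m : 0 ≤ wsum (rest.take m) := hnonneg m (by omega)
  have hstep : wsum (rest.take m) + stepVal rest[m] = -1 := by
    rw [htake] at hjsum
    rw [wsum_append] at hjsum
    simp only [wsum_cons, wsum_nil] at hjsum
    omega
  have hD : rest[m] = Step.D := by
    rcases hval : rest[m] with _ | _ | _ <;> rw [hval] at hstep <;> simp [stepVal] at hstep <;> omega
  have hsum0 : wsum (rest.take m) = 0 := by
    rw [hD] at hstep; simp [stepVal] at hstep; omega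
  refine ⟨rest.take m, rest.drop (m + 1), ?_, ?_, ?_⟩
  · rw [← hD, ← hdrop, List.take_append_drop]
  · rw [isMotzkin_iff]
    refine ⟨hsum0, fun i => ?_⟩
    rw [List.take_take]
    by_cases hi : i < m
    · exact hnonneg (min i m) (by omega)
    · rw [min_eq_right (by omega)]
      omega
  · rw [isMotzkin_iff]
    have hsplit : ∀ i, rest.take (m + 1 + i) = rest.take (m + 1) ++ (rest.drop (m + 1)).take i :=
      fun i => List.take_add
    constructor
    · have h2 : rest.take (m+1) ++ rest.drop (m+1) = rest := List.take_append_drop _ _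
      have h3 : wsum (rest.take (m+1)) + wsum (rest.drop (m+1)) = wsum rest := by
        rw [← wsum_append, h2]
      rw [hjsum, hrest] at h3
      omega
    · intro i
      have h2 := hsplit i
      have h3 := hpre' (m + 1 + i)
      rw [h2, wsum_append, hjsum] at h3
      omega

open Finset

noncomputable def motz (n : ℕ) : Finset (List Step) :=
  ((Finset.univ : Finset (Fin n → Step)).image List.ofFn).filter IsMotzkin

lemma mem_motz {n : ℕ} {p : List Step} :
    p ∈ motz n ↔ p.length = n ∧ IsMotzkin p := by
  simp only [motz, Finset.mem_filter, Finset.mem_image, Finset.mem_univ, true_and]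
  constructor
  · rintro ⟨⟨f, rfl⟩, h⟩
    exact ⟨by simp, h⟩
  · rintro ⟨rfl, h⟩
    exact ⟨⟨fun i => p.get i, List.ofFn_get p⟩, h⟩

lemma replicate_F_mem_motz (k : ℕ) : List.replicate k Step.F ∈ motz k := by
  rw [mem_motz]
  refine ⟨by simp, ?_⟩
  rw [isMotzkin_iff]
  constructor
  · simp [wsum, stepVal, List.map_replicate]
  · intro i
    rw [List.take_replicate]
    simp [wsum, stepVal, List.map_replicate]

lemma plt2_replicate_F (k : ℕ) : plt2 (List.replicate k Step.F) = 0 := by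
  induction k with
  | zero => rfl
  | succ m ih => simpa [List.replicate_succ, plt2] using ih

lemma allF_unique {k : ℕ} {p : List Step} (h : p.all (· == Step.F) = true)
    (hl : p.length = k) : p = List.replicate k Step.F := by
  rw [List.eq_replicate_iff]
  exact ⟨hl, by simpa using h⟩

noncomputable def a (n : ℕ) : Polynomial ℚ := ∑ p ∈ motz n, (Polynomial.X : Polynomial ℚ) ^ plt2 p

lemma a_zero : a 0 = 1 := by
  have : motz 0 = {([] : List Step)} := by
    ext p
    simp [mem_motz, List.length_eq_zero_iff, isMotzkin_iff]
    rintro rfl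
    exact ⟨rfl, fun i => by simp⟩
  simp [a, this, plt2]

/-- sum over Motzkin paths of X^(plt2 + allF indicator) -/
lemma sum_ind (k : ℕ) :
    ∑ ν ∈ motz k, (Polynomial.X : Polynomial ℚ)
        ^ ((if ν.all (· == Step.F) then 1 else 0) + plt2 ν)
      = a k + (Polynomial.X - 1) := by
  classical
  rw [← Finset.sum_filter_add_sum_filter_not (motz k) (fun ν => ν.all (· == Step.F) = true)]
  rw [a, ← Finset.sum_filter_add_sum_filter_not (motz k) (fun ν => ν.all (· == Step.F) = true)]
  have hfil : (motz k).filter (fun ν => ν.all (· == Step.F) = true) = {List.replicate k Step.F} := by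
    ext p
    simp only [Finset.mem_filter, Finset.mem_singleton, mem_motz]
    constructor
    · rintro ⟨⟨hl, _⟩, hall⟩
      exact allF_unique hall hl
    · rintro rfl
      exact ⟨(mem_motz (n := k)).mp (replicate_F_mem_motz k), by simp⟩
  have hcong : ∀ ν ∈ (motz k).filter (fun ν => ¬(ν.all (· == Step.F) = true)),
      (Polynomial.X : Polynomial ℚ) ^ ((if ν.all (· == Step.F) then 1 else 0) + plt2 ν)
        = (Polynomial.X : Polynomial ℚ) ^ plt2 ν := by
    intro ν hν
    rw [Finset.mem_filter] at hν
    rw [if_neg hν.2, Nat.zero_add]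
  rw [Finset.sum_congr rfl hcong, hfil]
  simp [plt2_replicate_F]
  ring

/-- The key recurrence. -/
lemma a_rec (n : ℕ) :
    a (n + 1) = a n + ∑ k ∈ Finset.range n, (a k + (Polynomial.X - 1)) * a (n - 1 - k) := by
  classical
  -- split motz (n+1) by head
  have hsplit : ∀ p ∈ motz (n + 1), p.head? = some Step.F ∨ p.head? = some Step.U := by
    intro p hp
    rw [mem_motz] at hp
    obtain ⟨hl, hm⟩ := hp
    rcases p with _ | ⟨x, rest⟩
    · simp at hl
    rw [isMotzkin_iff] at hm
    have h1 := hm.2 1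
    rcases x with _ | _ | _
    · right; rfl
    · left; rfl
    · exfalso
      rw [List.take_succ_cons, List.take_zero, wsum_cons, wsum_nil] at h1
      simp [stepVal] at h1
  rw [a, ← Finset.sum_filter_add_sum_filter_not (motz (n+1)) (fun p => p.head? = some Step.F)]
  congr 1
  · -- F-headed paths ↔ motz n
    rw [a]
    symm
    apply Finset.sum_bij (fun (p : List Step) (_ : p ∈ motz n) => Step.F :: p)
    · intro p hp
      rw [Finset.mem_filter]
      rw [mem_motz] at hp ⊢
      refine ⟨⟨by simp [hp.1], ?_⟩, rfl⟩
      rw [isMotzkin_iff] at hp ⊢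
      refine ⟨by simp [stepVal, hp.2.1], fun i => ?_⟩
      rcases i with _ | j
      · simp
      · rw [List.take_succ_cons, wsum_cons]
        have := hp.2.2 j
        simp only [stepVal]
        omega
    · intro p hp q hq h
      simpa using h
    · intro p hp
      rw [Finset.mem_filter] at hp
      obtain ⟨hp1, hp2⟩ := hp
      rcases p with _ | ⟨x, rest⟩
      · simp at hp2
      · obtain rfl : x = Step.F := by simpa using hp2
        refine ⟨rest, ?_, rfl⟩
        rw [mem_motz] at hp1 ⊢
        refine ⟨by simpa using hp1.1, ?_⟩
        have := hp1.2
        rw [isMotzkin_iff] at this ⊢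
        refine ⟨by simpa [stepVal] using this.1, fun i => ?_⟩
        have := this.2 (i + 1)
        rw [List.take_succ_cons, wsum_cons] at this
        simp only [stepVal] at this
        omega
    · intro p hp
      have : plt2 (Step.F :: p) = plt2 p := rfl
      rw [this]
  · -- U-headed paths
    have hU : (motz (n+1)).filter (fun p => ¬(p.head? = some Step.F))
        = (motz (n+1)).filter (fun p => p.head? = some Step.U) := by
      apply Finset.filter_congr
      intro p hp
      rcases hsplit p hp with h | h <;> simp [h]
    rw [hU]
    -- sum over sigma
    have hsum : ∀ k ∈ Finset.range n, (a k + (Polynomial.X - 1)) * a (n - 1 - k)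
        = ∑ q ∈ (motz k) ×ˢ (motz (n - 1 - k)),
            (Polynomial.X : Polynomial ℚ)
              ^ (((if q.1.all (· == Step.F) then 1 else 0) + plt2 q.1) + plt2 q.2) := by
      intro k _
      rw [Finset.sum_product, ← sum_ind k, Finset.sum_mul]
      refine Finset.sum_congr rfl fun ν _ => ?_
      rw [a, Finset.mul_sum]
      refine Finset.sum_congr rfl fun μ _ => ?_
      rw [← pow_add]
    rw [Finset.sum_congr rfl hsum]
    rw [← Finset.sum_sigma (Finset.range n)
      (fun k => (motz k) ×ˢ (motz (n - 1 - k)))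
      (fun q => (Polynomial.X : Polynomial ℚ)
        ^ (((if q.2.1.all (· == Step.F) then 1 else 0) + plt2 q.2.1) + plt2 q.2.2))]
    symm
    apply Finset.sum_bij
      (fun (q : Σ _ : ℕ, List Step × List Step)
        (_ : q ∈ (Finset.range n).sigma fun k => (motz k) ×ˢ (motz (n - 1 - k))) =>
          Step.U :: (q.2.1 ++ Step.D :: q.2.2))
    · rintro ⟨k, ν, μ⟩ hq
      rw [Finset.mem_sigma, Finset.mem_product] at hq
      obtain ⟨hk, hν, hμ⟩ := hq
      dsimp only at hk hν hμ ⊢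
      rw [Finset.mem_filter]
      rw [mem_motz] at hν hμ ⊢
      rw [Finset.mem_range] at hk
      refine ⟨⟨?_, motzkin_comp hν.2 hμ.2⟩, rfl⟩
      have e1 := hν.1
      have e2 := hμ.1
      simp only [List.length_cons, List.length_append, List.length_cons]
      omega
    · rintro ⟨k, ν, μ⟩ hq ⟨k', ν', μ'⟩ hq' heq
      rw [Finset.mem_sigma, Finset.mem_product] at hq hq'
      obtain ⟨hk, hν, hμ⟩ := hq
      obtain ⟨hk', hν', hμ'⟩ := hq'
      dsimp only at hk hν hμ hk' hν' hμ' heq ⊢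
      rw [mem_motz] at hν hμ hν' hμ'
      simp only [List.cons.injEq, true_and] at heq
      have key : ∀ (α β γ δ : List Step),
          α ++ Step.D :: γ = β ++ Step.D :: δ → α.length < β.length →
            IsMotzkin α → IsMotzkin β → False := by
        intro α β γ δ he hlen hα hβ
        have h1 : (α ++ Step.D :: γ).take (α.length + 1) = α ++ [Step.D] := by
          rw [List.take_append, List.take_of_length_le (by omega),
            Nat.add_sub_cancel_left, List.take_succ_cons, List.take_zero]
        have h2 : (β ++ Step.D :: δ).take (α.length + 1) = β.take (α.length + 1) := by
          rw [List.take_append]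
          have hz : α.length + 1 - β.length = 0 := by omega
          rw [hz, List.take_zero, List.append_nil]
        have h3 : β.take (α.length + 1) = α ++ [Step.D] := by rw [← h2, ← he, h1]
        rw [isMotzkin_iff] at hα hβ
        have h4 := hβ.2 (α.length + 1)
        rw [h3, wsum_append, hα.1, wsum_cons, wsum_nil] at h4
        simp [stepVal] at h4
      have hνν : ν = ν' := by
        rcases lt_trichotomy ν.length ν'.length with h | h | h
        · exact absurd (key ν ν' μ μ' heq h hν.2 hν'.2) (not_false)
        · exact (List.append_inj heq h).1
        · exact absurd (key ν' ν μ' μ heq.symm h hν'.2 hν.2) (not_false)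
      subst hνν
      have hkk : k = k' := by rw [← hν.1, ← hν'.1]
      subst hkk
      have h6 : Step.D :: μ = Step.D :: μ' := List.append_cancel_left heq
      obtain rfl : μ = μ' := by simpa using h6
      rfl
    · -- surjectivity
      intro p hp
      rw [Finset.mem_filter] at hp
      obtain ⟨hp1, hp2⟩ := hp
      rcases p with _ | ⟨x, rest⟩
      · simp at hp2
      obtain rfl : x = Step.U := by simpa using hp2
      rw [mem_motz] at hp1
      obtain ⟨ν, μ, rfl, hν, hμ⟩ := motzkin_decomp hp1.2
      refine ⟨⟨ν.length, ν, μ⟩, ?_, rfl⟩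
      rw [Finset.mem_sigma, Finset.mem_product, Finset.mem_range]
      dsimp only
      have hlen := hp1.1
      simp only [List.length_cons, List.length_append, List.length_cons] at hlen
      refine ⟨by omega, ?_, ?_⟩
      · rw [mem_motz]; exact ⟨rfl, hν⟩
      · rw [mem_motz]; exact ⟨by omega, hμ⟩
    · rintro ⟨k, ν, μ⟩ hq
      rw [Finset.mem_sigma, Finset.mem_product] at hq
      obtain ⟨hk, hν, hμ⟩ := hq
      dsimp only at hν hμ ⊢
      rw [mem_motz] at hν
      rw [plt2_comp hν.2]


open PowerSeries Polynomial

/-- The generating function for Motzkin paths by length and total number of plateaus. -/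
noncomputable def Fplt : PowerSeries (Polynomial ℚ) :=
  PowerSeries.mk fun n =>
    ∑ f : Fin n → Step,
      if IsMotzkin (List.ofFn f) then (Polynomial.X : Polynomial ℚ) ^ plt (List.ofFn f) else 0


lemma coeff_Fplt (n : ℕ) : (PowerSeries.coeff (R := Polynomial ℚ) n) Fplt = a n := by
  rw [Fplt, PowerSeries.coeff_mk, a, motz, Finset.filter_image,
    Finset.sum_image (fun x _ y _ h => List.ofFn_injective h), Finset.sum_filter]
  refine Finset.sum_congr rfl fun f _ => ?_
  rw [plt_eq_plt2]

noncomputable def G : PowerSeries (Polynomial ℚ) := PowerSeries.mk fun _ => 1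

lemma one_sub_X_mul_G : (1 - PowerSeries.X) * G = 1 := by
  apply PowerSeries.ext
  intro n
  rw [sub_mul, one_mul, map_sub]
  rcases n with _ | m
  · simp [G]
  · rw [PowerSeries.coeff_succ_X_mul]
    simp [G, PowerSeries.coeff_one]

lemma E1 : Fplt = 1 + PowerSeries.X * Fplt + PowerSeries.X ^ 2 * Fplt ^ 2
    + PowerSeries.X ^ 2 * (PowerSeries.C (R := Polynomial ℚ) Polynomial.X - 1) * (G * Fplt) := by
  have hterm : (PowerSeries.C (R := Polynomial ℚ) Polynomial.X - 1) * (G * Fplt)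
      = PowerSeries.C (R := Polynomial ℚ) Polynomial.X * (G * Fplt) - G * Fplt := by ring
  apply PowerSeries.ext
  intro n
  rw [map_add, map_add, map_add]
  rw [mul_assoc (PowerSeries.X ^ 2)]
  rw [PowerSeries.coeff_X_pow_mul', PowerSeries.coeff_X_pow_mul']
  rcases n with _ | m
  · simp [coeff_Fplt, a_zero]
  rcases m with _ | n
  · rw [PowerSeries.coeff_succ_X_mul]
    have h1 := a_rec 0
    simp only [Finset.range_zero, Finset.sum_empty, add_zero] at h1
    simp [coeff_Fplt, h1, PowerSeries.coeff_one]
  · -- n + 2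
    rw [PowerSeries.coeff_succ_X_mul]
    rw [if_pos (by omega), if_pos (by omega)]
    have hidx : n + 1 + 1 - 2 = n := by omega
    rw [hidx]
    rw [PowerSeries.coeff_one, if_neg (by omega)]
    rw [sq, hterm, map_sub, PowerSeries.coeff_C_mul]
    rw [PowerSeries.coeff_mul, PowerSeries.coeff_mul]
    rw [Finset.Nat.sum_antidiagonal_eq_sum_range_succ_mk,
      Finset.Nat.sum_antidiagonal_eq_sum_range_succ_mk]
    simp only [coeff_Fplt, G, PowerSeries.coeff_mk, one_mul]
    have hrec := a_rec (n + 1)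
    have hidx2 : ∀ k, n + 1 - 1 - k = n - k := fun k => by omega
    rw [hrec]
    have : ∑ k ∈ Finset.range (n + 1), (a k + (Polynomial.X - 1)) * a (n + 1 - 1 - k)
        = (∑ k ∈ Finset.range (n + 1), a k * a (n - k))
          + ((Polynomial.X : Polynomial ℚ) * ∑ k ∈ Finset.range (n + 1), a (n - k)
            - ∑ k ∈ Finset.range (n + 1), a (n - k)) := by
      rw [Finset.mul_sum, ← Finset.sum_sub_distrib, ← Finset.sum_add_distrib]
      refine Finset.sum_congr rfl fun k _ => ?_
      rw [hidx2 k]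
      ring
    rw [this]
    ring


/-- F(x,t) satisfies (x² − x³)F² − (1 − 2x − x²(t−2))F + (1 − x) = 0. -/
theorem plateau_functional_equation :
    (PowerSeries.X ^ 2 - PowerSeries.X ^ 3) * Fplt ^ 2
      - (1 - 2 * PowerSeries.X - PowerSeries.X ^ 2
          * (PowerSeries.C (R := Polynomial ℚ) Polynomial.X - 2)) * Fplt
      + (1 - PowerSeries.X) = 0 := by
  have e1 := E1
  have e2 := one_sub_X_mul_G
  linear_combination (PowerSeries.X - 1) * e1
    - PowerSeries.X ^ 2 * (PowerSeries.C (R := Polynomial ℚ) Polynomial.X - 1) * Fplt * e2
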